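/- Let R be an integral domain and a,b,c,d,e,f,g,h,i,j,k,l,m ∈ R. Define F_0 = fi − h^2, F_1 = fg − 2eh + il, F_2 = gl − e^2, F_3 = im − fh, F_4 = gm − 2ef + hl, F_5 = hm − f^2, F_6 = de^2 − d^2f + fgj − 2ehj + 2dhk − ik^2 − dgl + ijl, F_7 = gjl − e^2j + 2dek − gk^2 − d^2l, F_8 = gjm − 2efj + e^2k + 2dfk − hk^2 + hjl − gkl − d^2m. If F_0 = F_1 = ⋯ = F_8 = 0, then all 2×2 minors of the 2×6 matrix [[g,h,i,d,e,f],[e,f,h,k,l,m]] vanish. -/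
import Mathlib


/-- in an integral domain, the vanishing of `F₀,…,F₈` forces the
vanishing of all fifteen 2×2 minors of `[[g,h,i,d,e,f],[e,f,h,k,l,m]]`. -/
theorem stmt_8 (R : Type*) [CommRing R] [IsDomain R]
    (d e f g h i j k l m : R)
    (hF0 : f * i - h ^ 2 = 0)
    (hF1 : f * g - 2 * e * h + i * l = 0)
    (hF2 : g * l - e ^ 2 = 0)
    (hF3 : i * m - f * h = 0)
    (hF4 : g * m - 2 * e * f + h * l = 0)
    (hF5 : h * m - f ^ 2 = 0)
    (hF6 : d * e ^ 2 - d ^ 2 * f + f * g * j - 2 * e * h * j + 2 * d * h * k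
      - i * k ^ 2 - d * g * l + i * j * l = 0)
    (hF7 : g * j * l - e ^ 2 * j + 2 * d * e * k - g * k ^ 2 - d ^ 2 * l = 0)
    (hF8 : g * j * m - 2 * e * f * j + e ^ 2 * k + 2 * d * f * k - h * k ^ 2
      + h * j * l - g * k * l - d ^ 2 * m = 0) :
    f * g - e * h = 0 ∧ g * h - e * i = 0 ∧ h ^ 2 - f * i = 0 ∧
    g * k - d * e = 0 ∧ h * k - d * f = 0 ∧ i * k - d * h = 0 ∧
    g * l - e ^ 2 = 0 ∧ h * l - e * f = 0 ∧ i * l - e * h = 0 ∧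
    d * l - e * k = 0 ∧ g * m - e * f = 0 ∧ h * m - f ^ 2 = 0 ∧
    i * m - f * h = 0 ∧ d * m - f * k = 0 ∧ e * m - f * l = 0 := by
  have sqz : ∀ x : R, x ^ 2 = 0 → x = 0 := fun x hx =>
    pow_eq_zero_iff (two_ne_zero) |>.mp hx
  have m1 : f * g - e * h = 0 := sqz _ (by
    linear_combination (f * g) * hF1 - (g * l) * hF0 - h ^ 2 * hF2)
  have m2 : g * h - e * i = 0 := sqz _ (by
    linear_combination (g * i) * hF1 - g ^ 2 * hF0 - i ^ 2 * hF2)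
  have m4 : g * k - d * e = 0 := sqz _ (by
    linear_combination (g * j - d ^ 2) * hF2 - g * hF7)
  have m5 : h * k - d * f = 0 := sqz _ (by
    linear_combination (h * j) * hF4 - (h * k) * hF2 - h * hF8 - d ^ 2 * hF5)
  have m6 : i * k - d * h = 0 := sqz _ (by
    linear_combination (i * j) * hF1 - (i * d) * hF2 - i * hF6 - d ^ 2 * hF0)
  have m10 : d * l - e * k = 0 := sqz _ (by
    linear_combination (l * j - k ^ 2) * hF2 - l * hF7)
  have m11 : g * m - e * f = 0 := sqz _ (by
    linear_combination (g * m) * hF4 - (g * l) * hF5 - f ^ 2 * hF2)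
  have m14 : d * m - f * k = 0 := sqz _ (by
    linear_combination (m * j) * hF4 - (m * k) * hF2 - m * hF8 - k ^ 2 * hF5)
  have m15 : e * m - f * l = 0 := sqz _ (by
    linear_combination (l * m) * hF4 - m ^ 2 * hF2 - l ^ 2 * hF5)
  refine ⟨m1, m2, by linear_combination -hF0, m4, m5, m6, hF2,
    by linear_combination hF4 - m11, by linear_combination hF1 - m1,
    m10, m11, hF5, hF3, m14, m15⟩
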